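/- Directional derivative (gradient formula) of the population quantile-regression criterion: define Q(β) := ∫ ρ_τ(y − ⟨x, β⟩) dμ(x, y), which is finite for every β since ∫ |y| dμ < ∞ and ∫ ‖x‖ dν < ∞. Fix β ∈ ℝ^d such that κ x({⟨x, β⟩}) = 0 for ν-almost every x. Then for every direction v ∈ ℝ^d, the map t ↦ Q(β + t v) is differentiable at t = 0 with derivative ∫ ⟨x, v⟩ ( κ x((−∞, ⟨x, β⟩]) − τ ) dν(x). -/

import Mathlib

open MeasureTheory ProbabilityTheory
open scoped RealInnerProductSpace ENNReal

/-- The check (pinball) loss function `ρ_τ(u) = u (τ - 1{u ≤ 0})`. -/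
noncomputable def checkFn (τ u : ℝ) : ℝ := u * (τ - if u ≤ 0 then 1 else 0)

lemma checkFn_measurable (τ : ℝ) : Measurable (checkFn τ) := by
  unfold checkFn
  exact measurable_id.mul (measurable_const.sub
    (Measurable.ite measurableSet_Iic measurable_const measurable_const))

lemma checkFn_lip (τ : ℝ) (h0 : 0 ≤ τ) (h1 : τ ≤ 1) (a b : ℝ) :
    |checkFn τ a - checkFn τ b| ≤ |a - b| := by
  unfold checkFn
  have h2 := le_abs_self (a - b)
  have h3 := neg_abs_le (a - b)
  split_ifs with ha hb hb <;> rw [abs_le] <;> constructor <;> nlinarith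

lemma checkFn_abs_le (τ u : ℝ) (h0 : 0 ≤ τ) (h1 : τ ≤ 1) : |checkFn τ u| ≤ |u| := by
  have := checkFn_lip τ h0 h1 u 0
  simpa [checkFn] using this

/-- Directional derivative (gradient formula) of the population
quantile-regression criterion `Q(β) = ∫ ρ_τ(y − ⟨x,β⟩) dμ(x,y)`, `μ = ν ⊗ₖ κ`.  If
`κ x({⟨x,β⟩}) = 0` for `ν`-a.e. `x`, then for every direction `v`, `t ↦ Q(β + t v)` is
differentiable at `0` with derivative `∫ ⟨x,v⟩ (κ x((−∞,⟨x,β⟩]) − τ) dν(x)`. -/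
theorem qr_criterion_directional_deriv (d : ℕ) (τ : ℝ) (hτ : τ ∈ Set.Ioo (0 : ℝ) 1)
    (ν : Measure (EuclideanSpace ℝ (Fin d))) [IsProbabilityMeasure ν]
    (κ : Kernel (EuclideanSpace ℝ (Fin d)) ℝ) [IsMarkovKernel κ]
    (hνmom : Integrable (fun x => ‖x‖) ν)
    (hymom : Integrable (fun z : EuclideanSpace ℝ (Fin d) × ℝ => |z.2|) (ν.compProd κ))
    (β : EuclideanSpace ℝ (Fin d))
    (hatomless : ∀ᵐ x ∂ν, κ x {⟪x, β⟫} = 0) :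
    ∀ v : EuclideanSpace ℝ (Fin d),
      HasDerivAt
        (fun t : ℝ => ∫ z : EuclideanSpace ℝ (Fin d) × ℝ,
          checkFn τ (z.2 - ⟪z.1, β + t • v⟫) ∂(ν.compProd κ))
        (∫ x, ⟪x, v⟫ * ((κ x (Set.Iic ⟪x, β⟫)).toReal - τ) ∂ν) 0 := by
  intro v
  obtain ⟨hτ0, hτ1⟩ := hτ
  set μ : Measure (EuclideanSpace ℝ (Fin d) × ℝ) := ν.compProd κ
  haveI : IsProbabilityMeasure μ := by infer_instance
  set F : ℝ → EuclideanSpace ℝ (Fin d) × ℝ → ℝ := fun t z => checkFn τ (z.2 - ⟪z.1, β + t • v⟫) with hF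
  set F' : EuclideanSpace ℝ (Fin d) × ℝ → ℝ := fun z =>
    ⟪z.1, v⟫ * ((if z.2 - ⟪z.1, β⟫ ≤ 0 then (1:ℝ) else 0) - τ) with hF'
  -- basic measurability
  have minner : ∀ w : EuclideanSpace ℝ (Fin d), Measurable fun z : EuclideanSpace ℝ (Fin d) × ℝ => ⟪z.1, w⟫ := fun w =>
    (continuous_fst.inner continuous_const).measurable
  have hFmeas : ∀ t : ℝ, AEStronglyMeasurable (F t) μ := by
    intro t
    exact ((checkFn_measurable τ).comp (measurable_snd.sub (minner _))).aestronglyMeasurable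
  have hF'meas : AEStronglyMeasurable F' μ := by
    refine Measurable.aestronglyMeasurable ?_
    exact (minner v).mul
      ((Measurable.ite (measurableSet_le (measurable_snd.sub (minner β)) measurable_const)
        measurable_const measurable_const).sub measurable_const)
  -- integrability of ‖x‖ on μ
  have hfst : Integrable (fun z : EuclideanSpace ℝ (Fin d) × ℝ => ‖z.1‖) μ := by
    have h : μ.map Prod.fst = ν := by
      rw [show μ.map Prod.fst = μ.fst from rfl, Measure.fst_compProd]
    refine (integrable_map_measure ?_ measurable_fst.aemeasurable).mp (by rw [h]; exact hνmom)
    rw [h]; exact hνmom.1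
  -- integrability of F 0
  have hFint : Integrable (F 0) μ := by
    have hb : Integrable (fun z : EuclideanSpace ℝ (Fin d) × ℝ => |z.2| + ‖z.1‖ * ‖β‖) μ :=
      hymom.add (hfst.mul_const _)
    refine hb.mono' (hFmeas 0) ?_
    filter_upwards with z
    have h1 : |checkFn τ (z.2 - ⟪z.1, β + (0:ℝ) • v⟫)| ≤ |z.2 - ⟪z.1, β + (0:ℝ) • v⟫| :=
      checkFn_abs_le _ _ hτ0.le hτ1.le
    have h2 : |⟪z.1, β + (0:ℝ) • v⟫| ≤ ‖z.1‖ * ‖β‖ := by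
      simpa using abs_real_inner_le_norm z.1 β
    calc ‖F 0 z‖ = |checkFn τ (z.2 - ⟪z.1, β + (0:ℝ) • v⟫)| := rfl
      _ ≤ |z.2 - ⟪z.1, β + (0:ℝ) • v⟫| := h1
      _ ≤ |z.2| + |⟪z.1, β + (0:ℝ) • v⟫| := abs_sub _ _
      _ ≤ |z.2| + ‖z.1‖ * ‖β‖ := by linarith
  -- Lipschitz bound
  set bound : EuclideanSpace ℝ (Fin d) × ℝ → ℝ := fun z => ‖z.1‖ * ‖v‖ with hbound
  have hboundint : Integrable bound μ := hfst.mul_const _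
  have hlip : ∀ᵐ z ∂μ, LipschitzOnWith (Real.nnabs (bound z)) (F · z) (Metric.ball (0:ℝ) 1) := by
    filter_upwards with z
    refine LipschitzWith.lipschitzOnWith ?_
    refine LipschitzWith.of_dist_le_mul fun t s => ?_
    have key : |(z.2 - ⟪z.1, β + t • v⟫) - (z.2 - ⟪z.1, β + s • v⟫)| = |⟪z.1, v⟫| * |t - s| := by
      have harg : (z.2 - ⟪z.1, β + t • v⟫) - (z.2 - ⟪z.1, β + s • v⟫) = ⟪z.1, v⟫ * (s - t) := by
        simp only [inner_add_right, real_inner_smul_right]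
        ring
      rw [harg, abs_mul, abs_sub_comm s t]
    have h1 : dist (F t z) (F s z) ≤ |⟪z.1, v⟫| * dist t s := by
      rw [Real.dist_eq, Real.dist_eq, ← key]
      exact checkFn_lip τ hτ0.le hτ1.le _ _
    have h2 : |⟪z.1, v⟫| ≤ (Real.nnabs (bound z) : ℝ) := by
      have hb0 : (0:ℝ) ≤ bound z := mul_nonneg (norm_nonneg _) (norm_nonneg _)
      rw [Real.coe_nnabs, abs_of_nonneg hb0]
      exact abs_real_inner_le_norm z.1 v
    exact h1.trans (mul_le_mul_of_nonneg_right h2 dist_nonneg)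
  -- a.e. differentiability
  have hnull : ∀ᵐ z ∂μ, z.2 ≠ ⟪z.1, β⟫ := by
    have hset : MeasurableSet {z : EuclideanSpace ℝ (Fin d) × ℝ | z.2 = ⟪z.1, β⟫} :=
      measurableSet_eq_fun measurable_snd (minner β)
    rw [ae_iff]
    have : {z : EuclideanSpace ℝ (Fin d) × ℝ | ¬ z.2 ≠ ⟪z.1, β⟫} = {z : EuclideanSpace ℝ (Fin d) × ℝ | z.2 = ⟪z.1, β⟫} := by
      ext z
      simp only [Set.mem_setOf_eq, not_not]
    rw [this, Measure.compProd_apply hset]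
    have : ∀ᵐ x ∂ν, κ x (Prod.mk x ⁻¹' {z : EuclideanSpace ℝ (Fin d) × ℝ | z.2 = ⟪z.1, β⟫}) = 0 := by
      filter_upwards [hatomless] with x hx
      have : Prod.mk x ⁻¹' {z : EuclideanSpace ℝ (Fin d) × ℝ | z.2 = ⟪z.1, β⟫} = {⟪x, β⟫} := by
        ext y
        simp only [Set.mem_preimage, Set.mem_setOf_eq, Set.mem_singleton_iff]
      rw [this]; exact hx
    rw [lintegral_congr_ae this, lintegral_zero]
  have hdiff : ∀ᵐ z ∂μ, HasDerivAt (F · z) (F' z) 0 := by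
    filter_upwards [hnull] with z hz
    set c : ℝ := ⟪z.1, v⟫
    set u₀ : ℝ := z.2 - ⟪z.1, β⟫ with hu₀
    have hu0 : u₀ ≠ 0 := sub_ne_zero.mpr hz
    set K : ℝ := τ - if u₀ ≤ 0 then (1:ℝ) else 0 with hK
    have hlin : HasDerivAt (fun t : ℝ => (u₀ - t * c) * K) (-c * K) 0 := by
      have h1 : HasDerivAt (fun t : ℝ => u₀ - t * c) (-c) 0 := by
        simpa using ((hasDerivAt_id (0:ℝ)).mul_const c).const_sub u₀
      simpa using h1.mul_const K
    have heq : (fun t : ℝ => F t z) =ᶠ[nhds (0:ℝ)] fun t => (u₀ - t * c) * K := by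
      have hε : (0:ℝ) < |u₀| / (|c| + 1) := by positivity
      filter_upwards [Metric.ball_mem_nhds (0:ℝ) hε] with t ht
      rw [Metric.mem_ball, Real.dist_eq, sub_zero] at ht
      have htc : |t * c| < |u₀| := by
        rw [abs_mul]
        calc |t| * |c| ≤ |t| * (|c| + 1) := by nlinarith [abs_nonneg t, abs_nonneg c]
          _ < |u₀| / (|c| + 1) * (|c| + 1) := by
              have : (0:ℝ) < |c| + 1 := by positivity
              exact mul_lt_mul_of_pos_right ht this
          _ = |u₀| := by field_simp
      have hsign : (u₀ - t * c ≤ 0) ↔ (u₀ ≤ 0) := by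
        have habs := abs_lt.mp htc
        rcases lt_or_gt_of_ne hu0 with h | h
        · rw [abs_of_neg h] at habs
          constructor <;> intro <;> [exact h.le; linarith]
        · rw [abs_of_pos h] at habs
          constructor <;> intro <;> linarith
      show checkFn τ (z.2 - ⟪z.1, β + t • v⟫) = (u₀ - t * c) * K
      have harg : z.2 - ⟪z.1, β + t • v⟫ = u₀ - t * c := by
        simp only [inner_add_right, real_inner_smul_right, hu₀]; ring
      rw [harg, hK]
      unfold checkFn
      rw [if_congr hsign rfl rfl]
    have hval : -c * K = F' z := by
      rw [hF', hK]
      show -c * (τ - if u₀ ≤ 0 then (1:ℝ) else 0) = c * ((if u₀ ≤ 0 then (1:ℝ) else 0) - τ)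
      ring
    exact (hval ▸ hlin).congr_of_eventuallyEq heq
  -- apply the dominated-convergence derivative theorem
  obtain ⟨hF'int, hkey⟩ :=
    hasDerivAt_integral_of_dominated_loc_of_lip (F := F) (F' := F') (μ := μ)
      (x₀ := (0:ℝ)) (bound := bound) (Metric.ball_mem_nhds (0:ℝ) one_pos)
      (Filter.Eventually.of_forall hFmeas) hFint hF'meas hlip hboundint hdiff
  -- identify the derivative
  have hint_eq : ∫ z, F' z ∂μ = ∫ x, ⟪x, v⟫ * ((κ x (Set.Iic ⟪x, β⟫)).toReal - τ) ∂ν := by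
    rw [MeasureTheory.Measure.integral_compProd hF'int]
    refine integral_congr_ae ?_
    filter_upwards with x
    have hind : ∀ y : ℝ, (if y - ⟪x, β⟫ ≤ 0 then (1:ℝ) else 0)
        = (Set.Iic ⟪x, β⟫).indicator (fun _ => (1:ℝ)) y := by
      intro y
      rw [Set.indicator_apply]
      simp [sub_nonpos]
    calc ∫ y, F' (x, y) ∂(κ x)
        = ∫ y, ⟪x, v⟫ * ((Set.Iic ⟪x, β⟫).indicator (fun _ => (1:ℝ)) y - τ) ∂(κ x) := by
          refine integral_congr_ae (Filter.Eventually.of_forall fun y => ?_)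
          simp only [hF']
          rw [hind y]
      _ = ⟪x, v⟫ * ∫ y, ((Set.Iic ⟪x, β⟫).indicator (fun _ => (1:ℝ)) y - τ) ∂(κ x) := by
          rw [MeasureTheory.integral_const_mul]
      _ = ⟪x, v⟫ * ((κ x (Set.Iic ⟪x, β⟫)).toReal - τ) := by
          congr 1
          rw [integral_sub ((integrable_const (1:ℝ)).indicator measurableSet_Iic)
            (integrable_const τ)]
          rw [integral_indicator_const _ measurableSet_Iic]
          simp
          rfl
  rwa [hint_eq] at hkey
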